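/- (Output-feedback first-order necessary conditions.) Suppose the block-diagonal output-feedback gain sequence (K^y₁(k), K^y₂(k))_{k=0}^{N} minimizes J_N = Σ_{k=0}^{N}[x(k)ᵀQx(k) + u(k)ᵀRu(k)] + x(N+1)ᵀP_{N+1}x(N+1) over all such sequences, where x(k+1) = (A + B·diag(K^y₁(k),K^y₂(k))·H) x(k) from a fixed initial state x(0), with H = diag(H₁,H₂) and H partitioned so that y₁ = H₁x, y₂ = H₂x (here H₁ acts on x₁ and H₂ on x₂ blocks conformably). Define X₁₁(k) = x₁(k)x₁(k)ᵀ, X₁₂(k) = x₁(k)x₂(k)ᵀ, X₂₂(k) = x₂(k)x₂(k)ᵀ along the optimal trajectory; let P^y(k) be given backward by P^y(k) = Q + HᵀK^y(k)ᵀRK^y(k)H + (A+BK^y(k)H)ᵀP^y(k+1)(A+BK^y(k)H) with P^y(N+1) = P_{N+1}; and set Υ^y(k) = R + BᵀP^y(k+1)B, M^y(k) = BᵀP^y(k+1)A with conformable blocks Υ^y_{ij}(k), M^y_{ij}(k). Then for every k: Υ^y₁₁(k)K^y₁(k)H₁X₁₁(k)H₁ᵀ + M^y₁₁(k)X₁₁(k)H₁ᵀ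 + Υ^y₁₂(k)K^y₂(k)H₂X₁₂(k)ᵀH₁ᵀ + M^y₁₂(k)X₁₂(k)ᵀH₁ᵀ = 0 and Υ^y₁₂(k)ᵀK^y₁(k)H₁X₁₂(k)H₂ᵀ + M^y₂₁(k)X₁₂(k)H₂ᵀ + Υ^y₂₂(k)K^y₂(k)H₂X₂₂(k)H₂ᵀ + M^y₂₂(k)X₂₂(k)H₂ᵀ = 0. -/

import Mathlib

open Matrix
set_option linter.unusedSectionVars false
set_option maxHeartbeats 1000000

section helpers
variable {ι κ μ : Type*} [Fintype ι] [Fintype κ] [Fintype μ]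

lemma myMulVecMulVec (M : Matrix ι κ ℝ) (u : κ → ℝ) (v : μ → ℝ) :
    M * vecMulVec u v = vecMulVec (M *ᵥ u) v := by
  ext i j
  simp [mul_apply, vecMulVec_apply, mulVec, dotProduct, Finset.sum_mul, mul_assoc]

lemma myVecMulVecT (u : ι → ℝ) (v : κ → ℝ) :
    (vecMulVec u v)ᵀ = vecMulVec v u := by
  ext i j; simp [vecMulVec_apply, mul_comm]

lemma myAddVecMulVec (a b : ι → ℝ) (c : κ → ℝ) :
    vecMulVec a c + vecMulVec b c = vecMulVec (a + b) c := by
  ext i j; simp [vecMulVec_apply, add_mul]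

lemma myVecMulVecMul (u : ι → ℝ) (v : κ → ℝ) (M : Matrix κ μ ℝ) :
    vecMulVec u v * M = vecMulVec u (v ᵥ* M) := by
  ext i j
  simp [mul_apply, vecMulVec_apply, vecMul, dotProduct, Finset.mul_sum, mul_assoc]

lemma myVecMulVec_mulVec (u : ι → ℝ) (v : κ → ℝ) (w : κ → ℝ) :
    vecMulVec u v *ᵥ w = (v ⬝ᵥ w) • u := by
  ext i
  simp only [vecMulVec_apply, mulVec, dotProduct, Pi.smul_apply, smul_eq_mul, Finset.sum_mul]
  exact Finset.sum_congr rfl fun j _ => by ring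

lemma myDotTranspose (M : Matrix κ ι ℝ) (v : ι → ℝ) (u : κ → ℝ) :
    v ⬝ᵥ Mᵀ *ᵥ u = (M *ᵥ v) ⬝ᵥ u := by
  rw [dotProduct_mulVec, vecMul_transpose]

lemma myDotSym {W : Matrix ι ι ℝ} (hW : Wᵀ = W) (a b : ι → ℝ) :
    a ⬝ᵥ W *ᵥ b = b ⬝ᵥ W *ᵥ a := by
  conv_lhs => rw [← hW]
  rw [myDotTranspose, dotProduct_comm]

lemma myQuadCong (Mm : Matrix κ ι ℝ) (W : Matrix κ κ ℝ) (z : ι → ℝ) :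
    z ⬝ᵥ (Mmᵀ * W * Mm) *ᵥ z = (Mm *ᵥ z) ⬝ᵥ W *ᵥ (Mm *ᵥ z) := by
  rw [Matrix.mul_assoc, ← mulVec_mulVec, myDotTranspose, mulVec_mulVec]

lemma psd_transpose {W : Matrix ι ι ℝ} (h : W.PosSemidef) : Wᵀ = W := by
  have := h.1
  simpa [Matrix.IsHermitian, Matrix.conjTranspose_eq_transpose_of_trivial] using this

lemma quad_lin_zero (g h : ℝ) (H : ∀ ε : ℝ, 0 ≤ h * ε ^ 2 + 2 * g * ε) : g = 0 := by
  by_contra hg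
  have hg2 : 0 < g ^ 2 := by positivity
  rcases le_or_gt h 0 with hh | hh
  · have := H (-g)
    nlinarith [mul_nonpos_of_nonpos_of_nonneg hh (sq_nonneg g)]
  · have h0 : h ≠ 0 := hh.ne'
    have key := H (-g / h)
    have e : h * (-g / h) ^ 2 + 2 * g * (-g / h) = -(g ^ 2 / h) := by
      field_simp; ring
    rw [e] at key
    have : 0 < g ^ 2 / h := div_pos hg2 hh
    linarith

lemma expand_quad {W : Matrix ι ι ℝ} (hW : Wᵀ = W) (a b : ι → ℝ) (ε : ℝ) :
    (a + ε • b) ⬝ᵥ W *ᵥ (a + ε • b) =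
      a ⬝ᵥ W *ᵥ a + 2 * (b ⬝ᵥ W *ᵥ a) * ε + (b ⬝ᵥ W *ᵥ b) * ε ^ 2 := by
  have hsym := myDotSym hW a b
  simp [mulVec_add, mulVec_smul, dotProduct_add, add_dotProduct, smul_dotProduct,
    dotProduct_smul, hsym]
  ring

end helpers

/-- Output-feedback first-order necessary conditions for an
optimal sequence of block-diagonal output gains
`K^y(k) = diag(K^y₁(k), K^y₂(k))` with `H = diag(H₁, H₂)`. -/
theorem output_feedback_necessary_conditions
    {n₁ n₂ m₁ m₂ p₁ p₂ : ℕ}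
    (A : Matrix (Fin n₁ ⊕ Fin n₂) (Fin n₁ ⊕ Fin n₂) ℝ)
    (B : Matrix (Fin n₁ ⊕ Fin n₂) (Fin m₁ ⊕ Fin m₂) ℝ)
    (H₁ : Matrix (Fin p₁) (Fin n₁) ℝ) (H₂ : Matrix (Fin p₂) (Fin n₂) ℝ)
    (Q PN : Matrix (Fin n₁ ⊕ Fin n₂) (Fin n₁ ⊕ Fin n₂) ℝ)
    (R : Matrix (Fin m₁ ⊕ Fin m₂) (Fin m₁ ⊕ Fin m₂) ℝ)
    (hQpsd : Q.PosSemidef) (hRpsd : R.PosSemidef) (hPNpsd : PN.PosSemidef)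
    (N : ℕ)
    -- the optimal output-feedback gains and the closed-loop trajectory
    (K₁ : ℕ → Matrix (Fin m₁) (Fin p₁) ℝ)
    (K₂ : ℕ → Matrix (Fin m₂) (Fin p₂) ℝ)
    (x : ℕ → (Fin n₁ ⊕ Fin n₂) → ℝ)
    (hx : ∀ k, x (k + 1) =
      (A + B * Matrix.fromBlocks (K₁ k) 0 0 (K₂ k) *
        Matrix.fromBlocks H₁ 0 0 H₂).mulVec (x k))
    -- optimality among all block-diagonal output-feedback gain sequences
    (hopt : ∀ (K₁' : ℕ → Matrix (Fin m₁) (Fin p₁) ℝ)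
        (K₂' : ℕ → Matrix (Fin m₂) (Fin p₂) ℝ)
        (x' : ℕ → (Fin n₁ ⊕ Fin n₂) → ℝ),
      x' 0 = x 0 →
      (∀ k, x' (k + 1) =
        (A + B * Matrix.fromBlocks (K₁' k) 0 0 (K₂' k) *
          Matrix.fromBlocks H₁ 0 0 H₂).mulVec (x' k)) →
      (∑ k ∈ Finset.range (N + 1),
          (x k ⬝ᵥ Q.mulVec (x k) +
            (Matrix.fromBlocks (K₁ k) 0 0 (K₂ k) *
              Matrix.fromBlocks H₁ 0 0 H₂).mulVec (x k) ⬝ᵥ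
              R.mulVec ((Matrix.fromBlocks (K₁ k) 0 0 (K₂ k) *
                Matrix.fromBlocks H₁ 0 0 H₂).mulVec (x k)))) +
          x (N + 1) ⬝ᵥ PN.mulVec (x (N + 1)) ≤
        (∑ k ∈ Finset.range (N + 1),
          (x' k ⬝ᵥ Q.mulVec (x' k) +
            (Matrix.fromBlocks (K₁' k) 0 0 (K₂' k) *
              Matrix.fromBlocks H₁ 0 0 H₂).mulVec (x' k) ⬝ᵥ
              R.mulVec ((Matrix.fromBlocks (K₁' k) 0 0 (K₂' k) *
                Matrix.fromBlocks H₁ 0 0 H₂).mulVec (x' k)))) +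
          x' (N + 1) ⬝ᵥ PN.mulVec (x' (N + 1)))
    -- outer-product matrices along the optimal trajectory
    (X11 : ℕ → Matrix (Fin n₁) (Fin n₁) ℝ)
    (X12 : ℕ → Matrix (Fin n₁) (Fin n₂) ℝ)
    (X22 : ℕ → Matrix (Fin n₂) (Fin n₂) ℝ)
    (hX11 : ∀ k, X11 k =
      vecMulVec (fun i => x k (Sum.inl i)) (fun i => x k (Sum.inl i)))
    (hX12 : ∀ k, X12 k =
      vecMulVec (fun i => x k (Sum.inl i)) (fun i => x k (Sum.inr i)))
    (hX22 : ∀ k, X22 k =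
      vecMulVec (fun i => x k (Sum.inr i)) (fun i => x k (Sum.inr i)))
    -- the backward Riccati-type recursion for output feedback
    (P : ℕ → Matrix (Fin n₁ ⊕ Fin n₂) (Fin n₁ ⊕ Fin n₂) ℝ)
    (hPterm : P (N + 1) = PN)
    (hPrec : ∀ k ≤ N, P k =
      Q + (Matrix.fromBlocks H₁ 0 0 H₂)ᵀ *
            (Matrix.fromBlocks (K₁ k) 0 0 (K₂ k))ᵀ * R *
            Matrix.fromBlocks (K₁ k) 0 0 (K₂ k) * Matrix.fromBlocks H₁ 0 0 H₂ +
        (A + B * Matrix.fromBlocks (K₁ k) 0 0 (K₂ k) *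
            Matrix.fromBlocks H₁ 0 0 H₂)ᵀ * P (k + 1) *
          (A + B * Matrix.fromBlocks (K₁ k) 0 0 (K₂ k) *
            Matrix.fromBlocks H₁ 0 0 H₂))
    -- Υ^y(k) = R + BᵀP^y(k+1)B and M^y(k) = BᵀP^y(k+1)A
    (Υ : ℕ → Matrix (Fin m₁ ⊕ Fin m₂) (Fin m₁ ⊕ Fin m₂) ℝ)
    (M : ℕ → Matrix (Fin m₁ ⊕ Fin m₂) (Fin n₁ ⊕ Fin n₂) ℝ)
    (hΥ : ∀ k, Υ k = R + Bᵀ * P (k + 1) * B)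
    (hM : ∀ k, M k = Bᵀ * P (k + 1) * A) :
    ∀ k ≤ N,
      (Υ k).toBlocks₁₁ * K₁ k * H₁ * X11 k * H₁ᵀ +
          (M k).toBlocks₁₁ * X11 k * H₁ᵀ +
          (Υ k).toBlocks₁₂ * K₂ k * H₂ * (X12 k)ᵀ * H₁ᵀ +
          (M k).toBlocks₁₂ * (X12 k)ᵀ * H₁ᵀ = 0 ∧
      ((Υ k).toBlocks₁₂)ᵀ * K₁ k * H₁ * X12 k * H₂ᵀ +
          (M k).toBlocks₂₁ * X12 k * H₂ᵀ +
          (Υ k).toBlocks₂₂ * K₂ k * H₂ * X22 k * H₂ᵀ +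
          (M k).toBlocks₂₂ * X22 k * H₂ᵀ = 0 := by
  intro k hk
  have hRsym : Rᵀ = R := psd_transpose hRpsd
  have hQsym : Qᵀ = Q := psd_transpose hQpsd
  set Hm : Matrix (Fin p₁ ⊕ Fin p₂) (Fin n₁ ⊕ Fin n₂) ℝ := Matrix.fromBlocks H₁ 0 0 H₂ with hHm
  -- symmetry of P
  have hPsymAux : ∀ d j, j + d = N + 1 → (P j)ᵀ = P j := by
    intro d
    induction d with
    | zero =>
      intro j hj
      have : j = N + 1 := by omega
      subst this; rw [hPterm]; exact psd_transpose hPNpsd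
    | succ d ih =>
      intro j hj
      have hjN : j ≤ N := by omega
      have hP1 : (P (j + 1))ᵀ = P (j + 1) := ih (j + 1) (by omega)
      rw [hPrec j hjN]
      simp only [transpose_add, transpose_mul, transpose_transpose, hP1, hQsym, hRsym,
        Matrix.mul_assoc]
  have hPsym : ∀ j ≤ N + 1, (P j)ᵀ = P j := fun j hj =>
    hPsymAux (N + 1 - j) j (by omega)
  -- cost-to-go
  have ctg : ∀ d t, t + d = N + 1 → ∀ z : ℕ → (Fin n₁ ⊕ Fin n₂) → ℝ,
      (∀ i, t ≤ i → z (i + 1) = (A + B * Matrix.fromBlocks (K₁ i) 0 0 (K₂ i) * Hm) *ᵥ z i) →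
      ((∑ i ∈ Finset.Ico t (N + 1),
          (z i ⬝ᵥ Q *ᵥ z i +
            ((Matrix.fromBlocks (K₁ i) 0 0 (K₂ i) * Hm) *ᵥ z i) ⬝ᵥ R *ᵥ ((Matrix.fromBlocks (K₁ i) 0 0 (K₂ i) * Hm) *ᵥ z i))) +
        z (N + 1) ⬝ᵥ PN *ᵥ z (N + 1)) = z t ⬝ᵥ P t *ᵥ z t := by
    intro d
    induction d with
    | zero =>
      intro t ht z hz
      have : t = N + 1 := by omega
      subst this
      simp [Finset.Ico_self, hPterm]
    | succ d ih =>
      intro t ht z hz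
      have htN : t ≤ N := by omega
      rw [Finset.sum_eq_sum_Ico_succ_bot (by omega : t < N + 1)]
      have tail := ih (t + 1) (by omega) z (fun i hi => hz i (by omega))
      have hzt : z (t + 1) = (A + B * Matrix.fromBlocks (K₁ t) 0 0 (K₂ t) * Hm) *ᵥ z t := hz t le_rfl
      have e1 : Hmᵀ * (Matrix.fromBlocks (K₁ t) 0 0 (K₂ t))ᵀ * R *
          Matrix.fromBlocks (K₁ t) 0 0 (K₂ t) * Hm =
          (Matrix.fromBlocks (K₁ t) 0 0 (K₂ t) * Hm)ᵀ * R *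
            (Matrix.fromBlocks (K₁ t) 0 0 (K₂ t) * Hm) := by
        simp [transpose_mul, Matrix.mul_assoc]
      have expand : z t ⬝ᵥ P t *ᵥ z t =
          z t ⬝ᵥ Q *ᵥ z t +
            ((Matrix.fromBlocks (K₁ t) 0 0 (K₂ t) * Hm) *ᵥ z t) ⬝ᵥ
              R *ᵥ ((Matrix.fromBlocks (K₁ t) 0 0 (K₂ t) * Hm) *ᵥ z t) +
            z (t + 1) ⬝ᵥ P (t + 1) *ᵥ z (t + 1) := by
        calc z t ⬝ᵥ P t *ᵥ z t
            = z t ⬝ᵥ Q *ᵥ z t +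
              z t ⬝ᵥ (Hmᵀ * (Matrix.fromBlocks (K₁ t) 0 0 (K₂ t))ᵀ * R *
                Matrix.fromBlocks (K₁ t) 0 0 (K₂ t) * Hm) *ᵥ z t +
              z t ⬝ᵥ ((A + B * Matrix.fromBlocks (K₁ t) 0 0 (K₂ t) * Hm)ᵀ * P (t + 1) *
                (A + B * Matrix.fromBlocks (K₁ t) 0 0 (K₂ t) * Hm)) *ᵥ z t := by
              rw [hPrec t htN, add_mulVec, add_mulVec, dotProduct_add, dotProduct_add]
          _ = _ := by rw [e1, myQuadCong, myQuadCong, ← hzt]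
      rw [add_assoc, tail, expand]
  -- the first-order condition
  have key : ∀ (L₁ : Matrix (Fin m₁) (Fin p₁) ℝ) (L₂ : Matrix (Fin m₂) (Fin p₂) ℝ),
      ((Matrix.fromBlocks L₁ 0 0 L₂ * Hm) *ᵥ x k) ⬝ᵥ
        ((Υ k * (Matrix.fromBlocks (K₁ k) 0 0 (K₂ k) * Hm) + M k) *ᵥ x k) = 0 := by
    intro L₁ L₂
    classical
    set u : (Fin m₁ ⊕ Fin m₂) → ℝ :=
      (Matrix.fromBlocks (K₁ k) 0 0 (K₂ k) * Hm) *ᵥ x k with hu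
    set v : (Fin m₁ ⊕ Fin m₂) → ℝ :=
      (Matrix.fromBlocks L₁ 0 0 L₂ * Hm) *ᵥ x k with hv
    have hW : (P (k + 1))ᵀ = P (k + 1) := hPsym (k + 1) (by omega)
    have hg0 : v ⬝ᵥ R *ᵥ u + (B *ᵥ v) ⬝ᵥ P (k + 1) *ᵥ x (k + 1) = 0 := by
      refine quad_lin_zero _
        (v ⬝ᵥ R *ᵥ v + (B *ᵥ v) ⬝ᵥ P (k + 1) *ᵥ (B *ᵥ v)) fun ε => ?_
      set K₁' : ℕ → Matrix (Fin m₁) (Fin p₁) ℝ :=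
        Function.update K₁ k (K₁ k + ε • L₁) with hK₁'
      set K₂' : ℕ → Matrix (Fin m₂) (Fin p₂) ℝ :=
        Function.update K₂ k (K₂ k + ε • L₂) with hK₂'
      set x' : ℕ → (Fin n₁ ⊕ Fin n₂) → ℝ := fun n => Nat.rec (x 0)
        (fun j xj => (A + B * Matrix.fromBlocks (K₁' j) 0 0 (K₂' j) * Hm) *ᵥ xj) n with hx'def
      have hx'0 : x' 0 = x 0 := rfl
      have hx's : ∀ j, x' (j + 1) =
          (A + B * Matrix.fromBlocks (K₁' j) 0 0 (K₂' j) * Hm) *ᵥ x' j := fun j => rfl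
      have hKne : ∀ j, j ≠ k → Matrix.fromBlocks (K₁' j) 0 0 (K₂' j) =
          Matrix.fromBlocks (K₁ j) 0 0 (K₂ j) := by
        intro j hj
        rw [hK₁', hK₂', Function.update_of_ne hj, Function.update_of_ne hj]
      have hKk : Matrix.fromBlocks (K₁' k) 0 0 (K₂' k) =
          Matrix.fromBlocks (K₁ k) 0 0 (K₂ k) + ε • Matrix.fromBlocks L₁ 0 0 L₂ := by
        rw [hK₁', hK₂', Function.update_self, Function.update_self,
          Matrix.fromBlocks_smul, Matrix.fromBlocks_add]
        simp
      have hxeq : ∀ j, j ≤ k → x' j = x j := by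
        intro j
        induction j with
        | zero => intro _; exact hx'0
        | succ i ih =>
          intro hj
          have hik : i ≠ k := by omega
          rw [hx's i, hKne i hik, ih (by omega), ← hx i]
      have hx'k1 : x' (k + 1) = x (k + 1) + ε • (B *ᵥ v) := by
        have hmat : A + B * (Matrix.fromBlocks (K₁ k) 0 0 (K₂ k) +
            ε • Matrix.fromBlocks L₁ 0 0 L₂) * Hm =
            (A + B * Matrix.fromBlocks (K₁ k) 0 0 (K₂ k) * Hm) +
              ε • (B * (Matrix.fromBlocks L₁ 0 0 L₂ * Hm)) := by
          simp [Matrix.mul_add, Matrix.add_mul, Matrix.mul_smul, Matrix.smul_mul,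
            Matrix.mul_assoc, add_assoc]
        rw [hx's k, hKk, hxeq k le_rfl, hmat, add_mulVec, smul_mulVec,
          ← mulVec_mulVec, ← hx k, ← hv]
      have hineq := hopt K₁' K₂' x' hx'0 hx's
      have split : ∀ G : ℕ → ℝ, ∑ j ∈ Finset.range (N + 1), G j =
          (∑ j ∈ Finset.Ico 0 k, G j) + (G k + ∑ j ∈ Finset.Ico (k + 1) (N + 1), G j) := by
        intro G
        rw [Finset.range_eq_Ico,
          ← Finset.sum_Ico_consecutive _ (Nat.zero_le k) (by omega : k ≤ N + 1),
          Finset.sum_eq_sum_Ico_succ_bot (by omega : k < N + 1)]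
      rw [split, split] at hineq
      have hhead : ∑ j ∈ Finset.Ico 0 k,
          (x' j ⬝ᵥ Q *ᵥ x' j +
            (Matrix.fromBlocks (K₁' j) 0 0 (K₂' j) * Hm) *ᵥ x' j ⬝ᵥ
              R *ᵥ (Matrix.fromBlocks (K₁' j) 0 0 (K₂' j) * Hm) *ᵥ x' j) =
          ∑ j ∈ Finset.Ico 0 k,
          (x j ⬝ᵥ Q *ᵥ x j +
            (Matrix.fromBlocks (K₁ j) 0 0 (K₂ j) * Hm) *ᵥ x j ⬝ᵥ
              R *ᵥ (Matrix.fromBlocks (K₁ j) 0 0 (K₂ j) * Hm) *ᵥ x j) := by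
        refine Finset.sum_congr rfl fun j hj => ?_
        have hjk : j < k := (Finset.mem_Ico.mp hj).2
        rw [hxeq j hjk.le, hKne j hjk.ne]
      have htail := ctg (N - k) (k + 1) (by omega) x (fun i _ => hx i)
      have hx'rec : ∀ i, k + 1 ≤ i → x' (i + 1) =
          (A + B * Matrix.fromBlocks (K₁ i) 0 0 (K₂ i) * Hm) *ᵥ x' i := by
        intro i hi
        rw [hx's i, hKne i (by omega)]
      have htail' := ctg (N - k) (k + 1) (by omega) x' hx'rec
      have hcong' : ∑ j ∈ Finset.Ico (k + 1) (N + 1),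
          (x' j ⬝ᵥ Q *ᵥ x' j +
            (Matrix.fromBlocks (K₁' j) 0 0 (K₂' j) * Hm) *ᵥ x' j ⬝ᵥ
              R *ᵥ (Matrix.fromBlocks (K₁' j) 0 0 (K₂' j) * Hm) *ᵥ x' j) =
          ∑ j ∈ Finset.Ico (k + 1) (N + 1),
          (x' j ⬝ᵥ Q *ᵥ x' j +
            (Matrix.fromBlocks (K₁ j) 0 0 (K₂ j) * Hm) *ᵥ x' j ⬝ᵥ
              R *ᵥ (Matrix.fromBlocks (K₁ j) 0 0 (K₂ j) * Hm) *ᵥ x' j) := by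
        refine Finset.sum_congr rfl fun j hj => ?_
        have hjk : k + 1 ≤ j := (Finset.mem_Ico.mp hj).1
        rw [hKne j (by omega)]
      rw [hcong', hKk, hxeq k le_rfl] at hineq
      have hu' : ((Matrix.fromBlocks (K₁ k) 0 0 (K₂ k) +
          ε • Matrix.fromBlocks L₁ 0 0 L₂) * Hm) *ᵥ x k = u + ε • v := by
        rw [Matrix.add_mul, add_mulVec, Matrix.smul_mul, smul_mulVec, ← hu, ← hv]
      rw [hu'] at hineq
      have hq1 := expand_quad hRsym u v ε
      have hq2 := expand_quad hW (x (k + 1)) (B *ᵥ v) ε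
      rw [← hx'k1] at hq2
      linarith [hineq, htail, htail', hq1, hq2]
    have hvec : (Υ k * (Matrix.fromBlocks (K₁ k) 0 0 (K₂ k) * Hm) + M k) *ᵥ x k =
        R *ᵥ u + Bᵀ *ᵥ (P (k + 1) *ᵥ x (k + 1)) := by
      rw [hΥ k, hM k, hx k]
      simp only [Matrix.add_mul, add_mulVec, Matrix.mul_assoc, ← mulVec_mulVec,
        mulVec_add, hu]
      abel
    rw [hvec, dotProduct_add, myDotTranspose]
    exact hg0
  -- abbreviations
  set s : (Fin m₁ ⊕ Fin m₂) → ℝ := (Υ k * (Matrix.fromBlocks (K₁ k) 0 0 (K₂ k) * Hm) + M k) *ᵥ x k with hs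
  set w : (Fin p₁ ⊕ Fin p₂) → ℝ := Hm *ᵥ x k with hw
  have key2 : ∀ (L₁ : Matrix (Fin m₁) (Fin p₁) ℝ) (L₂ : Matrix (Fin m₂) (Fin p₂) ℝ),
      (Matrix.fromBlocks L₁ 0 0 L₂ *ᵥ w) ⬝ᵥ s = 0 := by
    intro L₁ L₂
    have := key L₁ L₂
    rwa [← Matrix.mulVec_mulVec] at this
  have hblock1 : (∀ a, s (Sum.inl a) = 0) ∨ (∀ b, w (Sum.inl b) = 0) := by
    have h := key2 (vecMulVec (fun a => s (Sum.inl a)) (fun b => w (Sum.inl b))) 0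
    rw [Matrix.fromBlocks_mulVec] at h
    simp only [Matrix.zero_mulVec, add_zero, zero_add, myVecMulVec_mulVec] at h
    rw [show ((fun b => w (Sum.inl b)) ⬝ᵥ w ∘ Sum.inl) =
      ((fun b => w (Sum.inl b)) ⬝ᵥ (fun b => w (Sum.inl b))) from rfl] at h
    have h2 : (Sum.elim (((fun b => w (Sum.inl b)) ⬝ᵥ (fun b => w (Sum.inl b))) •
        (fun a => s (Sum.inl a))) (0 : Fin m₂ → ℝ)) ⬝ᵥ s =
        ((fun b => w (Sum.inl b)) ⬝ᵥ (fun b => w (Sum.inl b))) *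
          ((fun a => s (Sum.inl a)) ⬝ᵥ (fun a => s (Sum.inl a))) := by
      simp [dotProduct, Fintype.sum_sum_type, Finset.mul_sum, mul_assoc]
    rw [h2] at h
    rcases mul_eq_zero.mp h with h' | h'
    · right
      intro b
      exact congrFun (dotProduct_self_eq_zero.mp h') b
    · left
      intro a
      exact congrFun (dotProduct_self_eq_zero.mp h') a
  have hblock2 : (∀ a, s (Sum.inr a) = 0) ∨ (∀ b, w (Sum.inr b) = 0) := by
    have h := key2 0 (vecMulVec (fun a => s (Sum.inr a)) (fun b => w (Sum.inr b)))
    rw [Matrix.fromBlocks_mulVec] at h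
    simp only [Matrix.zero_mulVec, add_zero, zero_add, myVecMulVec_mulVec] at h
    rw [show ((fun b => w (Sum.inr b)) ⬝ᵥ w ∘ Sum.inr) =
      ((fun b => w (Sum.inr b)) ⬝ᵥ (fun b => w (Sum.inr b))) from rfl] at h
    have h2 : (Sum.elim (0 : Fin m₁ → ℝ) (((fun b => w (Sum.inr b)) ⬝ᵥ (fun b => w (Sum.inr b))) •
        (fun a => s (Sum.inr a)))) ⬝ᵥ s =
        ((fun b => w (Sum.inr b)) ⬝ᵥ (fun b => w (Sum.inr b))) *
          ((fun a => s (Sum.inr a)) ⬝ᵥ (fun a => s (Sum.inr a))) := by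
      simp [dotProduct, Fintype.sum_sum_type, Finset.mul_sum, mul_assoc]
    rw [h2] at h
    rcases mul_eq_zero.mp h with h' | h'
    · right
      intro b
      exact congrFun (dotProduct_self_eq_zero.mp h') b
    · left
      intro a
      exact congrFun (dotProduct_self_eq_zero.mp h') a
  have hΥsym : (Υ k)ᵀ = Υ k := by
    rw [hΥ k]
    simp [transpose_add, transpose_mul, transpose_transpose, hPsym (k + 1) (by omega),
      hRsym, Matrix.mul_assoc]
  have hΥ21 : ((Υ k).toBlocks₁₂)ᵀ = (Υ k).toBlocks₂₁ := by
    ext i j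
    have := congrFun (congrFun hΥsym (Sum.inr i)) (Sum.inl j)
    simpa [Matrix.toBlocks₁₂, Matrix.toBlocks₂₁] using this
  have hSfull : Υ k * (Matrix.fromBlocks (K₁ k) 0 0 (K₂ k) * Hm) + M k =
      Matrix.fromBlocks
        ((Υ k).toBlocks₁₁ * (K₁ k * H₁) + (M k).toBlocks₁₁)
        ((Υ k).toBlocks₁₂ * (K₂ k * H₂) + (M k).toBlocks₁₂)
        ((Υ k).toBlocks₂₁ * (K₁ k * H₁) + (M k).toBlocks₂₁)
        ((Υ k).toBlocks₂₂ * (K₂ k * H₂) + (M k).toBlocks₂₂) := by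
    conv_lhs => rw [← Matrix.fromBlocks_toBlocks (Υ k), ← Matrix.fromBlocks_toBlocks (M k), hHm]
    rw [Matrix.fromBlocks_multiply, Matrix.fromBlocks_multiply, Matrix.fromBlocks_add]
    simp
  have hsel : s = Sum.elim
      (((Υ k).toBlocks₁₁ * (K₁ k * H₁) + (M k).toBlocks₁₁) *ᵥ (fun i => x k (Sum.inl i)) +
        ((Υ k).toBlocks₁₂ * (K₂ k * H₂) + (M k).toBlocks₁₂) *ᵥ (fun i => x k (Sum.inr i)))
      (((Υ k).toBlocks₂₁ * (K₁ k * H₁) + (M k).toBlocks₂₁) *ᵥ (fun i => x k (Sum.inl i)) +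
        ((Υ k).toBlocks₂₂ * (K₂ k * H₂) + (M k).toBlocks₂₂) *ᵥ (fun i => x k (Sum.inr i))) := by
    rw [hs, hSfull, Matrix.fromBlocks_mulVec]
    rfl
  have hwel : w = Sum.elim (H₁ *ᵥ (fun i => x k (Sum.inl i))) (H₂ *ᵥ (fun i => x k (Sum.inr i))) := by
    rw [hw, hHm, Matrix.fromBlocks_mulVec]
    simp only [Matrix.zero_mulVec, add_zero, zero_add]
    rfl
  -- block structure identities
  have hgoal1 : (Υ k).toBlocks₁₁ * K₁ k * H₁ * X11 k * H₁ᵀ +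
      (M k).toBlocks₁₁ * X11 k * H₁ᵀ +
      (Υ k).toBlocks₁₂ * K₂ k * H₂ * (X12 k)ᵀ * H₁ᵀ +
      (M k).toBlocks₁₂ * (X12 k)ᵀ * H₁ᵀ =
      vecMulVec (fun a => s (Sum.inl a)) (fun b => w (Sum.inl b)) := by
    have e1 : (fun a => s (Sum.inl a)) =
        ((Υ k).toBlocks₁₁ * (K₁ k * H₁) + (M k).toBlocks₁₁) *ᵥ (fun i => x k (Sum.inl i)) +
          ((Υ k).toBlocks₁₂ * (K₂ k * H₂) + (M k).toBlocks₁₂) *ᵥ (fun i => x k (Sum.inr i)) := by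
      funext a; rw [hsel]; rfl
    have e2 : (fun b => w (Sum.inl b)) = H₁ *ᵥ (fun i => x k (Sum.inl i)) := by
      funext b; rw [hwel]; rfl
    rw [e1, e2, hX11 k, hX12 k, myVecMulVecT]
    simp only [myMulVecMulVec, myVecMulVecMul, vecMul_transpose, myAddVecMulVec]
    congr 1
    simp only [add_mulVec, Matrix.mul_assoc]
    abel
  have hgoal2 : ((Υ k).toBlocks₁₂)ᵀ * K₁ k * H₁ * X12 k * H₂ᵀ +
      (M k).toBlocks₂₁ * X12 k * H₂ᵀ +
      (Υ k).toBlocks₂₂ * K₂ k * H₂ * X22 k * H₂ᵀ +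
      (M k).toBlocks₂₂ * X22 k * H₂ᵀ =
      vecMulVec (fun a => s (Sum.inr a)) (fun b => w (Sum.inr b)) := by
    have e1 : (fun a => s (Sum.inr a)) =
        ((Υ k).toBlocks₂₁ * (K₁ k * H₁) + (M k).toBlocks₂₁) *ᵥ (fun i => x k (Sum.inl i)) +
          ((Υ k).toBlocks₂₂ * (K₂ k * H₂) + (M k).toBlocks₂₂) *ᵥ (fun i => x k (Sum.inr i)) := by
      funext a; rw [hsel]; rfl
    have e2 : (fun b => w (Sum.inr b)) = H₂ *ᵥ (fun i => x k (Sum.inr i)) := by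
      funext b; rw [hwel]; rfl
    rw [e1, e2, hX12 k, hX22 k, hΥ21]
    simp only [myMulVecMulVec, myVecMulVecMul, vecMul_transpose, myAddVecMulVec]
    congr 1
    simp only [add_mulVec, Matrix.mul_assoc]
    abel
  constructor
  · rw [hgoal1]
    rcases hblock1 with h | h
    · ext i j; simp [vecMulVec_apply, h]
    · ext i j; simp [vecMulVec_apply, h]
  · rw [hgoal2]
    rcases hblock2 with h | h
    · ext i j; simp [vecMulVec_apply, h]
    · ext i j; simp [vecMulVec_apply, h]
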